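/- Let $d, k$ be positive integers and let $A \subseteq \mathbb{R}^d$ be a finite non-empty set with affine dimension $d$. Then $|kA| \geq \binom{k+d-1}{d}|A| - (k-1)\binom{k+d-1}{d-1}$. -/

import Mathlib

open scoped Pointwise

namespace KFold

open Finset Module

noncomputable section

variable {d : ℕ}

local notation "E" => (Fin d → ℝ)

/-- affine dimension of a finite set -/
def adim (A : Finset E) : ℕ := finrank ℝ (vectorSpan ℝ (A : Set E))

/-- the correction binomial coefficient, with the convention that it is `0` for `m = 0`. -/
def hc : ℕ → ℕ → ℝ
  | 0, _ => 0
  | (M+1), J => ((J + M + 1).choose M : ℝ)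

/-! ### Sumset basics -/

theorem mem_nsmul_add {A : Finset E} {p q : ℕ} {x y : E}
    (hx : x ∈ p • A) (hy : y ∈ q • A) : x + y ∈ (p + q) • A := by
  rw [add_nsmul]; exact Finset.add_mem_add hx hy

theorem nsmul_mem_nsmul' {A : Finset E} {v : E} (hv : v ∈ A) (k : ℕ) : k • v ∈ k • A := by
  induction k with
  | zero => simp [Finset.mem_zero]
  | succ n ih =>
      rw [succ_nsmul, succ_nsmul]
      exact Finset.add_mem_add ih hv

theorem nsmul_subset_nsmul' {A B : Finset E} (h : A ⊆ B) (k : ℕ) : k • A ⊆ k • B := by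
  induction k with
  | zero => simp
  | succ n ih =>
      rw [succ_nsmul, succ_nsmul]
      exact Finset.add_subset_add ih h

theorem map_le_of_mem_nsmul {A : Finset E} {f : E →ₗ[ℝ] ℝ} {c : ℝ}
    (h : ∀ a ∈ A, f a ≤ c) {k : ℕ} {x : E} (hx : x ∈ k • A) : f x ≤ k * c := by
  induction k generalizing x with
  | zero =>
      rw [zero_nsmul] at hx
      rw [Finset.mem_zero] at hx
      simp [hx]
  | succ n ih =>
      rw [succ_nsmul, Finset.mem_add] at hx
      obtain ⟨y, hy, z, hz, rfl⟩ := hx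
      have := ih hy
      have := h z hz
      push_cast
      rw [map_add]
      nlinarith

theorem map_eq_of_mem_nsmul {A : Finset E} {f : E →ₗ[ℝ] ℝ} {c : ℝ}
    (h : ∀ a ∈ A, f a = c) {k : ℕ} {x : E} (hx : x ∈ k • A) : f x = k * c := by
  induction k generalizing x with
  | zero =>
      rw [zero_nsmul] at hx
      rw [Finset.mem_zero] at hx
      simp [hx]
  | succ n ih =>
      rw [succ_nsmul, Finset.mem_add] at hx
      obtain ⟨y, hy, z, hz, rfl⟩ := hx
      rw [map_add, ih hy, h z hz]
      push_cast; ring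

theorem nsmul_singleton (a : E) (k : ℕ) : k • ({a} : Finset E) = {k • a} := by
  induction k with
  | zero => simp; rfl
  | succ n ih =>
      rw [succ_nsmul, succ_nsmul, ih, Finset.singleton_add_singleton]

/-! ### Dimension lemmas -/

theorem adim_mono {A B : Finset E} (h : A ⊆ B) : adim A ≤ adim B := by
  apply Submodule.finrank_mono
  exact vectorSpan_mono ℝ (by exact_mod_cast Finset.coe_subset.2 h)

theorem adim_insert_le (A : Finset E) (v : E) : adim (insert v A) ≤ adim A + 1 := by
  classical
  have h := finrank_vectorSpan_insert_le_set ℝ (A : Set E) v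
  unfold adim
  rw [Finset.coe_insert]
  exact h

theorem adim_insert_of_not_mem_span {A : Finset E} (hA : A.Nonempty) {v : E}
    (hv : v ∉ affineSpan ℝ (A : Set E)) : adim (insert v A) = adim A + 1 := by
  classical
  refine le_antisymm (adim_insert_le A v) ?_
  obtain ⟨a₀, ha₀⟩ := hA
  have hlt : vectorSpan ℝ (A : Set E) < vectorSpan ℝ ((insert v A : Finset E) : Set E) := by
    refine lt_of_le_of_ne (vectorSpan_mono ℝ (by simp [Finset.coe_insert, Set.subset_insert])) ?_
    intro heq
    apply hv
    have hmem : v -ᵥ a₀ ∈ vectorSpan ℝ ((insert v A : Finset E) : Set E) := by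
      apply vsub_mem_vectorSpan <;> simp [ha₀]
    rw [← heq] at hmem
    have ha₀' : (a₀ : E) ∈ affineSpan ℝ (A : Set E) := subset_affineSpan ℝ _ ha₀
    have := (AffineSubspace.vsub_right_mem_direction_iff_mem ha₀' v).1
      (by rwa [direction_affineSpan])
    exact this
  have h2 : adim A < adim (insert v A) := by
    simpa only [adim] using Submodule.finrank_lt_finrank_of_lt hlt
  omega

theorem adim_card {A : Finset E} (hA : A.Nonempty) : adim A + 1 ≤ A.card := by
  classical
  have hpos : 0 < A.card := Finset.card_pos.2 hA
  have h := finrank_vectorSpan_range_le ℝ (fun x : {x // x ∈ A} => (x : E))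
    (n := A.card - 1) (by rw [Fintype.card_coe]; omega)
  have hr : Set.range (fun x : {x // x ∈ A} => (x : E)) = (A : Set E) := Subtype.range_coe
  rw [hr] at h
  simp only [adim]
  omega

theorem adim_eq_zero {A : Finset E} (hA : A.Nonempty) (h : adim A = 0) : ∃ a, A = {a} := by
  obtain ⟨a, ha⟩ := hA
  refine ⟨a, Finset.eq_singleton_iff_unique_mem.2 ⟨ha, fun b hb => ?_⟩⟩
  have hbot : vectorSpan ℝ (A : Set E) = ⊥ := Submodule.finrank_eq_zero.1 h
  have hmem : b -ᵥ a ∈ vectorSpan ℝ (A : Set E) := vsub_mem_vectorSpan ℝ hb ha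
  rw [hbot, Submodule.mem_bot] at hmem
  have : b - a = 0 := hmem
  have := sub_eq_zero.1 this
  exact this

/-! ### Constant on affine span -/

theorem map_const_on_span {S : Finset E} {f : E →ₗ[ℝ] ℝ} {c : ℝ}
    (h : ∀ a ∈ S, f a = c) {x : E} (hx : x ∈ affineSpan ℝ (S : Set E)) : f x = c := by
  rcases S.eq_empty_or_nonempty with rfl | ⟨a₀, ha₀⟩
  · rw [Finset.coe_empty, AffineSubspace.span_empty] at hx
    exact absurd hx (AffineSubspace.notMem_bot ℝ E x)
  · have ha₀' : (a₀ : E) ∈ affineSpan ℝ (S : Set E) := subset_affineSpan ℝ _ ha₀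
    have hdir : x -ᵥ a₀ ∈ vectorSpan ℝ (S : Set E) := by
      rw [← direction_affineSpan]
      exact AffineSubspace.vsub_mem_direction hx ha₀'
    have hker : vectorSpan ℝ (S : Set E) ≤ LinearMap.ker f := by
      rw [vectorSpan_def, Submodule.span_le]
      rintro u ⟨p, hp, q, hq, rfl⟩
      simp only [SetLike.mem_coe, LinearMap.mem_ker, vsub_eq_sub, map_sub]
      rw [h p hp, h q hq, sub_self]
    have hf0 : f (x - a₀) = 0 := hker hdir
    rw [map_sub] at hf0
    have := h a₀ ha₀
    linarith

/-! ### Extreme point -/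

theorem exists_extreme (A : Finset E) (h : A.Nonempty) :
    ∃ v ∈ A, v ∉ convexHull ℝ ((A.erase v : Finset E) : Set E) := by
  classical
  have hcomp : IsCompact (convexHull ℝ (A : Set E)) := A.finite_toSet.isCompact_convexHull ℝ
  have hne : (convexHull ℝ (A : Set E)).Nonempty := by
    obtain ⟨a, ha⟩ := h
    exact ⟨a, subset_convexHull ℝ _ ha⟩
  obtain ⟨v, hv⟩ := hcomp.extremePoints_nonempty hne
  have hvA : v ∈ A := extremePoints_convexHull_subset hv
  refine ⟨v, hvA, fun hmem => ?_⟩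
  rw [(convex_convexHull ℝ (A : Set E)).mem_extremePoints_iff_mem_diff_convexHull_diff] at hv
  apply hv.2
  refine convexHull_mono ?_ hmem
  intro a ha
  simp only [Finset.coe_erase, Set.mem_diff, Set.mem_singleton_iff] at ha
  exact ⟨subset_convexHull ℝ _ ha.1, ha.2⟩

/-! ### Dual functional -/

theorem exists_dual {U : Submodule ℝ E} {x : E} (hx : x ∉ U) :
    ∃ g : E →ₗ[ℝ] ℝ, (∀ u ∈ U, g u = 0) ∧ g x = 1 := by
  obtain ⟨f, hfx, hmap⟩ := U.exists_dual_map_eq_bot_of_notMem hx inferInstance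
  refine ⟨(f x)⁻¹ • f, fun u hu => ?_, ?_⟩
  · have : f u = 0 := by
      have : f u ∈ U.map f := Submodule.mem_map_of_mem hu
      rwa [hmap, Submodule.mem_bot] at this
    simp [this]
  · simp [inv_mul_cancel₀ hfx]

/-! ### Facet functional -/

theorem facet_step (A' : Finset E) (v : E) (f : E →ₗ[ℝ] ℝ) (c : ℝ)
    (h1 : ∀ a ∈ A', f a ≤ c) (h2 : c < f v)
    (hnotdone : ∃ a ∈ A',
      (a:E) ∉ affineSpan ℝ (insert v ((A'.filter (fun a => f a = c)) : Set E))) :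
    ∃ (f' : E →ₗ[ℝ] ℝ) (c' : ℝ), (∀ a ∈ A', f' a ≤ c') ∧ c' < f' v ∧
      (A'.filter (fun a => f a = c)) ⊆ (A'.filter (fun a => f' a = c')) ∧
      ¬ ((A'.filter (fun a => f' a = c')) ⊆ (A'.filter (fun a => f a = c))) := by
  classical
  set S := A'.filter (fun a => f a = c) with hS
  obtain ⟨astar, hastarA, hastar⟩ := hnotdone
  set W := affineSpan ℝ (insert v (S : Set E)) with hW
  have hvW : v ∈ W := subset_affineSpan ℝ _ (Set.mem_insert _ _)
  have hSW : ∀ a ∈ S, (a : E) ∈ W := fun a ha =>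
    subset_affineSpan ℝ _ (Set.mem_insert_of_mem _ (by exact_mod_cast ha))
  have hxU : astar -ᵥ v ∉ W.direction := by
    intro hmem
    exact hastar ((AffineSubspace.vsub_right_mem_direction_iff_mem hvW _).1 hmem)
  obtain ⟨g, hgU, hgx⟩ := exists_dual hxU
  have hgS : ∀ a ∈ S, g a = g v := by
    intro a ha
    have hm : (a : E) -ᵥ v ∈ W.direction :=
      (AffineSubspace.vsub_right_mem_direction_iff_mem hvW _).2 (hSW a ha)
    have h0 := hgU _ hm
    rw [vsub_eq_sub, map_sub] at h0
    linarith
  have hgastar : g astar - g v = 1 := by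
    rw [vsub_eq_sub, map_sub] at hgx
    linarith
  have hastarS : astar ∉ S := fun hmem => hastar (hSW _ hmem)
  have hfastar : f astar < c := lt_of_le_of_ne (h1 _ hastarA)
    (fun h => hastarS (Finset.mem_filter.2 ⟨hastarA, h⟩))
  set T := A'.filter (fun a => g v < g a ∧ f a < c) with hT
  have hTne : T.Nonempty := ⟨astar, Finset.mem_filter.2 ⟨hastarA, by linarith, hfastar⟩⟩
  set t := T.inf' hTne (fun a => (c - f a)/(g a - g v)) with ht
  obtain ⟨amin, haminT, hamin⟩ := T.exists_mem_eq_inf' hTne (fun a => (c - f a)/(g a - g v))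
  have htpos : 0 < t := by
    rw [ht, Finset.lt_inf'_iff]
    intro a ha
    obtain ⟨haA, hg, hf⟩ := Finset.mem_filter.1 ha
    exact div_pos (by linarith) (by linarith)
  set f' := f + t • g with hf'
  set c' := c + t * g v with hc'
  have hf'app : ∀ x, f' x = f x + t * g x := by
    intro x
    simp [hf', smul_eq_mul]
  have key : ∀ a ∈ A', f' a ≤ c' := by
    intro a ha
    rw [hf'app, hc']
    by_cases haS : a ∈ S
    · rw [(Finset.mem_filter.1 haS).2, hgS a haS]
    · have hfa : f a < c := lt_of_le_of_ne (h1 a ha)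
        (fun h => haS (Finset.mem_filter.2 ⟨ha, h⟩))
      by_cases hga : g v < g a
      · have haT : a ∈ T := Finset.mem_filter.2 ⟨ha, hga, hfa⟩
        have hle : t ≤ (c - f a)/(g a - g v) := Finset.inf'_le _ haT
        have h3 := (le_div_iff₀ (by linarith : (0:ℝ) < g a - g v)).1 hle
        nlinarith
      · push_neg at hga
        have h4 : t * g a ≤ t * g v := mul_le_mul_of_nonneg_left hga (le_of_lt htpos)
        linarith
  have hSsub : S ⊆ A'.filter (fun a => f' a = c') := by
    intro a ha
    refine Finset.mem_filter.2 ⟨(Finset.mem_filter.1 ha).1, ?_⟩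
    rw [hf'app, hc', (Finset.mem_filter.1 ha).2, hgS a ha]
  obtain ⟨haminA, hamin_g, hamin_f⟩ := Finset.mem_filter.1 haminT
  have haminS' : amin ∈ A'.filter (fun a => f' a = c') := by
    refine Finset.mem_filter.2 ⟨haminA, ?_⟩
    rw [hf'app, hc']
    have hne2 : g amin - g v ≠ 0 := ne_of_gt (by linarith)
    have hmul : t * (g amin - g v) = c - f amin := by
      rw [ht, hamin]
      field_simp
    nlinarith
  have haminS : amin ∉ S := by
    intro h
    exact absurd (Finset.mem_filter.1 h).2 (ne_of_lt hamin_f)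
  refine ⟨f', c', key, ?_, hSsub, fun hsub => haminS (hsub haminS')⟩
  rw [hf'app, hc']
  linarith

theorem facet_loop (A' : Finset E) (v : E) : ∀ (r : ℕ) (f : E →ₗ[ℝ] ℝ) (c : ℝ),
    (∀ a ∈ A', f a ≤ c) → c < f v → (A'.filter (fun a => f a = c)).Nonempty →
    A'.card ≤ (A'.filter (fun a => f a = c)).card + r →
    ∃ (f' : E →ₗ[ℝ] ℝ) (c' : ℝ), (∀ a ∈ A', f' a ≤ c') ∧ c' < f' v ∧
      (A'.filter (fun a => f' a = c')).Nonempty ∧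
      ∀ a ∈ A', (a : E) ∈
        affineSpan ℝ (insert v ((A'.filter (fun a => f' a = c') : Finset E) : Set E)) := by
  classical
  intro r
  induction r with
  | zero =>
      intro f c h1 h2 h3 h4
      have heq : A'.filter (fun a => f a = c) = A' :=
        Finset.eq_of_subset_of_card_le (Finset.filter_subset _ _) (by omega)
      refine ⟨f, c, h1, h2, h3, fun a ha => ?_⟩
      apply subset_affineSpan ℝ _
      rw [heq]
      exact Set.mem_insert_of_mem _ (by exact_mod_cast ha)
  | succ r ih =>
      intro f c h1 h2 h3 h4
      by_cases hdone : ∀ a ∈ A', (a:E) ∈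
          affineSpan ℝ (insert v ((A'.filter (fun a => f a = c)) : Set E))
      · exact ⟨f, c, h1, h2, h3, hdone⟩
      · push_neg at hdone
        obtain ⟨f', c', k1, k2, k3, k4⟩ := facet_step A' v f c h1 h2 (by
          obtain ⟨a, ha, hna⟩ := hdone
          exact ⟨a, ha, hna⟩)
        have hss : A'.filter (fun a => f a = c) ⊂ A'.filter (fun a => f' a = c') :=
          Finset.ssubset_iff_subset_ne.2 ⟨k3, fun h => k4 (le_of_eq h.symm)⟩
        have hcard := Finset.card_lt_card hss
        apply ih f' c' k1 k2
        · exact h3.mono k3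
        · omega

theorem exists_facet (A' : Finset E) (v : E) (hv : v ∉ convexHull ℝ (A' : Set E))
    (hne : A'.Nonempty) :
    ∃ (f : E →ₗ[ℝ] ℝ) (c : ℝ), (∀ a ∈ A', f a ≤ c) ∧ c < f v ∧
      (A'.filter (fun a => f a = c)).Nonempty ∧
      ∀ a ∈ A', (a : E) ∈
        affineSpan ℝ (insert v ((A'.filter (fun a => f a = c) : Finset E) : Set E)) := by
  classical
  obtain ⟨f0, u, hfv, hfb⟩ := geometric_hahn_banach_point_closed
    (convex_convexHull ℝ (A' : Set E)) (A'.finite_toSet.isClosed_convexHull ℝ) hv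
  set f : E →ₗ[ℝ] ℝ := -f0.toLinearMap with hf
  have hfA : ∀ a ∈ A', f a < -u := by
    intro a ha
    have := hfb a (subset_convexHull ℝ _ (by exact_mod_cast ha))
    simp only [hf, LinearMap.neg_apply, ContinuousLinearMap.coe_coe]
    linarith
  have hfv' : -u < f v := by
    simp only [hf, LinearMap.neg_apply, ContinuousLinearMap.coe_coe]
    linarith
  set c := A'.sup' hne (fun a => f a) with hc
  obtain ⟨amax, hamaxA, hamax⟩ := A'.exists_mem_eq_sup' hne (fun a => f a)
  have h1 : ∀ a ∈ A', f a ≤ c := fun a ha => Finset.le_sup' _ ha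
  have h2 : c < f v := by
    rw [hc, hamax]
    exact lt_trans (hfA _ hamaxA) hfv'
  have h3 : (A'.filter (fun a => f a = c)).Nonempty :=
    ⟨amax, Finset.mem_filter.2 ⟨hamaxA, hamax.symm⟩⟩
  exact facet_loop A' v A'.card f c h1 h2 h3 (by omega)

/-! ### Arithmetic lemmas -/

theorem choose_id (M K : ℕ) :
    ((M:ℝ) + 1) * ((K + M).choose M : ℝ) - K * hc M K = ((K + M + 1).choose M : ℝ) := by
  match M with
  | 0 => simp [hc]
  | (M'+1) =>
    simp only [hc]
    have h1 : (K + M' + 1).choose (M' + 1) * (M' + 1) = (K + M' + 1).choose M' * (K + 1) := by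
      have := Nat.choose_succ_right_eq (K + M' + 1) M'
      rw [this]
      congr 1
      omega
    have h2 : (K + (M'+1) + 1).choose (M'+1) =
        (K + M' + 1).choose M' + (K + M' + 1).choose (M'+1) := by
      have : K + (M'+1) + 1 = (K + M' + 1) + 1 := by omega
      rw [this, Nat.choose_succ_succ]
    have h1' : ((K + M' + 1).choose (M' + 1) : ℝ) * (M' + 1) =
        ((K + M' + 1).choose M' : ℝ) * (K + 1) := by exact_mod_cast congrArg (Nat.cast (R := ℝ)) h1
    have h2' : ((K + (M'+1) + 1).choose (M'+1) : ℝ) =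
        ((K + M' + 1).choose M' : ℝ) + ((K + M' + 1).choose (M'+1) : ℝ) := by
      exact_mod_cast congrArg (Nat.cast (R := ℝ)) h2
    have hKM : K + (M' + 1) = K + M' + 1 := by omega
    have hKM2 : K + (M' + 1) + 1 = K + M' + 1 + 1 := by omega
    rw [hKM2] at h2'
    rw [hKM]
    push_cast at h1' h2' ⊢
    linarith [h1', h2']

theorem AL1 (M K : ℕ) :
    ((K + M + 1).choose (M+1) : ℝ) ≤
      1 + ∑ J ∈ Finset.range K, (((J + M).choose M : ℝ) * (M+1) - J * hc M J) := by
  induction K with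
  | zero => simp
  | succ K ihK =>
      rw [Finset.sum_range_succ]
      have hid := choose_id M K
      have hpas : ((K + 1 + M + 1).choose (M+1) : ℝ) =
          ((K + M + 1).choose M : ℝ) + ((K + M + 1).choose (M+1) : ℝ) := by
        have : K + 1 + M + 1 = (K + M + 1) + 1 := by omega
        rw [this]
        exact_mod_cast congrArg (Nat.cast (R := ℝ)) (Nat.choose_succ_succ (K + M + 1) M)
      rw [hpas]
      linarith

theorem pascal_hc (M K : ℕ) :
    ((K + M + 2).choose M : ℝ) = ((K + M + 1).choose M : ℝ) + hc M (K + 1) := by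
  match M with
  | 0 => simp [hc]
  | (M'+1) =>
      simp only [hc]
      rw [show K + (M'+1) + 2 = (K + M' + 2) + 1 from by omega,
        show K + (M'+1) + 1 = K + M' + 2 from by omega,
        show K + 1 + M' + 1 = K + M' + 2 from by omega]
      have h := Nat.choose_succ_succ (K + M' + 2) M'
      rw [h]
      push_cast
      ring

theorem AL2 (M K : ℕ) (n : ℝ) :
    ((K + M + 1).choose (M+1) : ℝ) * n - K * hc (M+1) K ≤
      1 + ∑ J ∈ Finset.range (K+1), (((J + M).choose M : ℝ) * (n-1) - J * hc M J) := by
  induction K with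
  | zero => simp [hc]
  | succ K ihK =>
      rw [Finset.sum_range_succ]
      -- new summand : C(K+1+M, M)*(n-1) - (K+1) * hc M (K+1)
      -- RHS increment identities
      have hpas : ((K + 1 + M + 1).choose (M+1) : ℝ) =
          ((K + M + 1).choose M : ℝ) + ((K + M + 1).choose (M+1) : ℝ) := by
        have : K + 1 + M + 1 = (K + M + 1) + 1 := by omega
        rw [this]
        exact_mod_cast congrArg (Nat.cast (R := ℝ)) (Nat.choose_succ_succ (K + M + 1) M)
      have hhc1 : hc (M+1) (K+1) = ((K + M + 2).choose M : ℝ) := by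
        simp only [hc]
        rw [show K + 1 + M + 1 = K + M + 2 from by omega]
      have hhc2 : hc (M+1) K = ((K + M + 1).choose M : ℝ) := by
        simp only [hc]
      have hph := pascal_hc M K
      have hKM : ((K + 1 + M).choose M : ℝ) = ((K + M + 1).choose M : ℝ) := by
        norm_cast
        congr 1
        omega
      rw [hpas, hhc1]
      rw [hhc2] at ihK
      rw [hKM]
      have hph2 : ((K:ℝ)+1) * ((K + M + 2).choose M : ℝ) =
          ((K:ℝ)+1) * ((K + M + 1).choose M : ℝ) + ((K:ℝ)+1) * hc M (K+1) := by
        rw [hph]; ring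
      push_cast at ihK hph2 ⊢
      linarith [ihK, hph2]

/-! ### Counting lemmas -/

theorem card_image_translate (B : Finset E) (w : E) :
    ((B.image (fun y => w + y)).card) = B.card :=
  Finset.card_image_of_injective _ (add_right_injective w)

theorem mem_image_level {B : Finset E} {w : E} {x : E} (f : E →ₗ[ℝ] ℝ) {c : ℝ}
    (hB : ∀ a ∈ B, f a = c) {j : ℕ}
    (hx : x ∈ (j • B).image (fun y => w + y)) : f x = f w + j * c := by
  obtain ⟨y, hy, rfl⟩ := Finset.mem_image.1 hx
  rw [map_add, map_eq_of_mem_nsmul hB hy]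

theorem image_level_subset {A B : Finset E} {v : E} (hvA : v ∈ A) (hB : B ⊆ A)
    {j k : ℕ} (hj : j ≤ k) :
    (j • B).image (fun y => (k - j) • v + y) ⊆ k • A := by
  intro x hx
  obtain ⟨y, hy, rfl⟩ := Finset.mem_image.1 hx
  have h1 : (k - j) • v ∈ (k - j) • A := nsmul_mem_nsmul' hvA _
  have h2 : y ∈ j • A := nsmul_subset_nsmul' hB j hy
  have := mem_nsmul_add h1 h2
  rwa [Nat.sub_add_cancel hj] at this

theorem count2 {A A' : Finset E} {v : E} (hvA : v ∈ A) (hA' : A' = A.erase v)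
    (g : E →ₗ[ℝ] ℝ) (c : ℝ) (hgA : ∀ a ∈ A', g a = c) (hgv : g v = c + 1) (K : ℕ) :
    ∑ j ∈ Finset.range (K+2), ((j • A').card : ℝ) ≤ (((K+1) • A).card : ℝ) := by
  classical
  set X : ℕ → Finset E := fun j => (j • A').image (fun y => (K+1-j) • v + y) with hX
  have hcast : ∀ j ∈ Finset.range (K+2), ((K+1-j : ℕ) : ℝ) = (K+1 : ℝ) - j := by
    intro j hj
    rw [Finset.mem_range] at hj
    rw [Nat.cast_sub (by omega)]
    push_cast
    ring
  have hlevel : ∀ j ∈ Finset.range (K+2), ∀ x ∈ X j, g x = (K+1 : ℝ) * c + ((K+1:ℝ) - j) := by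
    intro j hj x hx
    have h1 := mem_image_level g hgA hx
    rw [map_nsmul, nsmul_eq_mul, hgv, hcast j hj] at h1
    rw [h1]
    ring
  have hdisj : ∀ j ∈ Finset.range (K+2), ∀ j' ∈ Finset.range (K+2), j ≠ j' →
      Disjoint (X j) (X j') := by
    intro j hj j' hj' hne
    rw [Finset.disjoint_left]
    intro x hx hx'
    have e1 := hlevel j hj x hx
    have e2 := hlevel j' hj' x hx'
    apply hne
    have : (j : ℝ) = j' := by linarith
    exact_mod_cast this
  have hsub : (Finset.range (K+2)).biUnion X ⊆ (K+1) • A := by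
    intro x hx
    obtain ⟨j, hj, hxj⟩ := Finset.mem_biUnion.1 hx
    rw [Finset.mem_range] at hj
    exact image_level_subset hvA (hA' ▸ Finset.erase_subset _ _) (by omega) hxj
  have hcards := Finset.card_biUnion hdisj
  have hle := Finset.card_le_card hsub
  have hXcard : ∀ j, (X j).card = (j • A').card := fun j => card_image_translate _ _
  have : ∑ j ∈ Finset.range (K+2), (j • A').card ≤ ((K+1) • A).card := by
    calc ∑ j ∈ Finset.range (K+2), (j • A').card
        = ((Finset.range (K+2)).biUnion X).card := by
          rw [hcards]
          exact Finset.sum_congr rfl (fun j _ => (hXcard j).symm)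
      _ ≤ ((K+1) • A).card := hle
  exact_mod_cast this

theorem count1 {A A' S : Finset E} {v : E} (hvA : v ∈ A) (hA' : A' = A.erase v)
    (hS : S ⊆ A') (f : E →ₗ[ℝ] ℝ) (c : ℝ) (hfA : ∀ a ∈ A', f a ≤ c)
    (hfS : ∀ a ∈ S, f a = c) (hfv : c < f v) (K : ℕ) :
    (((K+1) • A').card : ℝ) + ∑ j ∈ Finset.range (K+1), ((j • S).card : ℝ) ≤
      (((K+1) • A).card : ℝ) := by
  classical
  set X : ℕ → Finset E := fun j => (j • S).image (fun y => (K+1-j) • v + y) with hX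
  set Y : Finset E := (K+1) • A' with hY
  have hcast : ∀ j ∈ Finset.range (K+1), ((K+1-j : ℕ) : ℝ) = (K+1 : ℝ) - j := by
    intro j hj
    rw [Finset.mem_range] at hj
    rw [Nat.cast_sub (by omega)]
    push_cast
    ring
  have hlevel : ∀ j ∈ Finset.range (K+1), ∀ x ∈ X j,
      f x = ((K+1:ℝ) - j) * (f v - c) + (K+1:ℝ) * c := by
    intro j hj x hx
    have h1 := mem_image_level f hfS hx
    rw [map_nsmul, nsmul_eq_mul, hcast j hj] at h1
    rw [h1]
    ring
  have hlow : ∀ j ∈ Finset.range (K+1), ∀ x ∈ X j, (K+1:ℝ) * c < f x := by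
    intro j hj x hx
    rw [hlevel j hj x hx]
    rw [Finset.mem_range] at hj
    have h2 : (1:ℝ) ≤ (K+1:ℝ) - j := by
      have : (j : ℝ) ≤ K := by exact_mod_cast Nat.lt_succ_iff.1 hj
      linarith
    nlinarith
  have hY : ∀ x ∈ Y, f x ≤ (K+1:ℝ) * c := by
    intro x hx
    have := map_le_of_mem_nsmul hfA hx
    exact_mod_cast this
  have hdisj : ∀ j ∈ Finset.range (K+1), ∀ j' ∈ Finset.range (K+1), j ≠ j' →
      Disjoint (X j) (X j') := by
    intro j hj j' hj' hne
    rw [Finset.disjoint_left]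
    intro x hx hx'
    have e1 := hlevel j hj x hx
    have e2 := hlevel j' hj' x hx'
    apply hne
    have h3 : ((K+1:ℝ) - j) * (f v - c) = ((K+1:ℝ) - j') * (f v - c) := by linarith
    have h4 : f v - c ≠ 0 := ne_of_gt (by linarith)
    have : (j : ℝ) = j' := by
      have := mul_right_cancel₀ h4 h3
      linarith
    exact_mod_cast this
  have hdisjY : Disjoint Y ((Finset.range (K+1)).biUnion X) := by
    rw [Finset.disjoint_left]
    intro x hx hx'
    obtain ⟨j, hj, hxj⟩ := Finset.mem_biUnion.1 hx'
    exact absurd (hY x hx) (not_le.2 (hlow j hj x hxj))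
  have hsub : Y ∪ (Finset.range (K+1)).biUnion X ⊆ (K+1) • A := by
    apply Finset.union_subset
    · exact nsmul_subset_nsmul' (hA' ▸ Finset.erase_subset _ _) _
    · intro x hx
      obtain ⟨j, hj, hxj⟩ := Finset.mem_biUnion.1 hx
      rw [Finset.mem_range] at hj
      exact image_level_subset hvA (hS.trans (hA' ▸ Finset.erase_subset _ _)) (by omega) hxj
  have hXcard : ∀ j, (X j).card = (j • S).card := fun j => card_image_translate _ _
  have hcount : Y.card + ∑ j ∈ Finset.range (K+1), (j • S).card ≤ ((K+1) • A).card := by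
    calc Y.card + ∑ j ∈ Finset.range (K+1), (j • S).card
        = Y.card + ∑ j ∈ Finset.range (K+1), (X j).card := by
          rw [Finset.sum_congr rfl (fun j _ => (hXcard j).symm)]
      _ = Y.card + ((Finset.range (K+1)).biUnion X).card := by rw [Finset.card_biUnion hdisj]
      _ = (Y ∪ (Finset.range (K+1)).biUnion X).card :=
          (Finset.card_union_of_disjoint hdisjY).symm
      _ ≤ ((K+1) • A).card := Finset.card_le_card hsub
  exact_mod_cast hcount

/-! ### Main induction -/

def P (m : ℕ) : Prop := ∀ (K : ℕ) (A : Finset (Fin d → ℝ)), A.Nonempty → adim A = m →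
    (((K + m).choose m : ℝ)) * A.card - K * hc m K ≤ (((K+1) • A).card : ℝ)

theorem P_zero : P (d := d) 0 := by
  intro K A hA hdim
  obtain ⟨a, rfl⟩ := adim_eq_zero hA hdim
  rw [nsmul_singleton]
  simp [hc]

theorem P_succ (M : ℕ) (ih : P (d := d) M) : P (d := d) (M+1) := by
  classical
  suffices H : ∀ (n : ℕ) (K : ℕ) (A : Finset (Fin d → ℝ)), A.card ≤ n → A.Nonempty →
      adim A = M+1 →
      (((K + (M+1)).choose (M+1) : ℝ)) * A.card - K * hc (M+1) K ≤ (((K+1) • A).card : ℝ) by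
    intro K A hA hdim
    exact H A.card K A le_rfl hA hdim
  intro n
  induction n with
  | zero =>
      intro K A hcard hA _
      have := Finset.card_pos.2 hA
      omega
  | succ n ihn =>
      intro K A hcard hA hdim
      obtain ⟨v, hvA, hvext⟩ := exists_extreme A hA
      set A' := A.erase v with hA'
      have hins : insert v A' = A := Finset.insert_erase hvA
      have hcardA : A'.card + 1 = A.card := by
        rw [hA', Finset.card_erase_of_mem hvA]
        have := Finset.card_pos.2 hA
        omega
      have hA'ne : A'.Nonempty := by
        rw [← Finset.card_pos]
        by_contra h
        push_neg at h
        have h0 : A'.card = 0 := by omega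
        have h1 : A.card = 1 := by omega
        obtain ⟨a, ha⟩ := Finset.card_eq_one.1 h1
        have h2 : adim A = 0 := by
          rw [ha]
          unfold adim
          rw [Finset.coe_singleton, vectorSpan_singleton]
          exact finrank_bot ℝ _
        omega
      have hsub : A' ⊆ A := Finset.erase_subset _ _
      have hdimle : adim A' ≤ M + 1 := hdim ▸ adim_mono hsub
      have hdimge : M ≤ adim A' := by
        have h5 := adim_insert_le A' v
        rw [hins, hdim] at h5
        omega
      have hAcard : (A'.card : ℝ) = (A.card : ℝ) - 1 := by
        have : (A'.card : ℝ) + 1 = (A.card : ℝ) := by exact_mod_cast hcardA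
        linarith
      have hKM : K + (M+1) = K + M + 1 := by omega
      by_cases hcase : adim A' = M + 1
      · -- Case 1 : dimension is preserved
        obtain ⟨f, c, hfle, hfv, hSne, hspan⟩ := exists_facet A' v hvext hA'ne
        set S := A'.filter (fun a => f a = c) with hSdef
        have hfS : ∀ a ∈ S, f a = c := fun a ha => (Finset.mem_filter.1 ha).2
        have hSsubA' : S ⊆ A' := Finset.filter_subset _ _
        have hspanA : affineSpan ℝ (insert v (S : Set E)) = affineSpan ℝ (A : Set E) := by
          apply le_antisymm
          · apply affineSpan_mono
            intro x hx
            rcases hx with rfl | hx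
            · exact hvA
            · exact hsub (hSsubA' (by exact_mod_cast hx))
          · rw [affineSpan_le]
            intro x hx
            have hx' : x ∈ insert v A' := by
              rw [hins]
              exact_mod_cast hx
            rcases Finset.mem_insert.1 hx' with rfl | hx''
            · exact subset_affineSpan ℝ _ (Set.mem_insert _ _)
            · exact hspan x hx''
        have hdimvS : adim (insert v S) = M + 1 := by
          unfold adim
          rw [Finset.coe_insert, ← direction_affineSpan, hspanA, direction_affineSpan]
          exact hdim
        have hvS : v ∉ affineSpan ℝ (S : Set E) := by
          intro hmem
          exact absurd (map_const_on_span hfS hmem) (ne_of_gt hfv)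
        have hdimS : adim S = M := by
          have := adim_insert_of_not_mem_span hSne hvS
          omega
        have hcardS : M + 1 ≤ S.card := by
          have := adim_card hSne
          omega
        have hlb : ∀ J ∈ Finset.range K, (((J + M).choose M : ℝ) * (M+1) - J * hc M J : ℝ)
            ≤ (((J+1) • S).card : ℝ) := by
          intro J _
          have h6 := ih J S hSne hdimS
          have h7 : ((M:ℝ)+1) ≤ (S.card : ℝ) := by exact_mod_cast hcardS
          have h8 : (0:ℝ) ≤ ((J + M).choose M : ℝ) := by positivity
          nlinarith
        have hzero : (((0:ℕ) • S).card : ℝ) = 1 := by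
          have h0 : ((0:ℕ) • S) = ({0} : Finset (Fin d → ℝ)) := by
            rw [zero_nsmul]; rfl
          rw [h0, Finset.card_singleton]
          norm_num
        have hIH := ihn K A' (by omega) hA'ne hcase
        have hAL1 := AL1 M K
        have hcnt := count1 hvA hA' hSsubA' f c hfle hfS hfv K
        have hshift : ∑ j ∈ Finset.range (K+1), ((j • S).card : ℝ)
            = 1 + ∑ J ∈ Finset.range K, (((J+1) • S).card : ℝ) := by
          rw [Finset.sum_range_succ']
          rw [hzero]
          ring
        have hsum : 1 + ∑ J ∈ Finset.range K, (((J + M).choose M : ℝ) * (M+1) - J * hc M J)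
            ≤ ∑ j ∈ Finset.range (K+1), ((j • S).card : ℝ) := by
          rw [hshift]
          have := Finset.sum_le_sum hlb
          linarith
        rw [hKM] at hIH ⊢
        rw [hAcard] at hIH
        linarith
      · -- Case 2 : dimension drops
        have hdim' : adim A' = M := by omega
        have hvnot : v ∉ affineSpan ℝ (A' : Set E) := by
          intro hmem
          have h9 : affineSpan ℝ (insert v (A' : Set E)) = affineSpan ℝ (A' : Set E) :=
            affineSpan_insert_eq_affineSpan ℝ hmem
          have h10 : adim A = adim A' := by
            unfold adim
            rw [← hins, Finset.coe_insert, ← direction_affineSpan, h9, direction_affineSpan]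
          omega
        obtain ⟨a₀, ha₀⟩ := id hA'ne
        have hva : v -ᵥ a₀ ∉ vectorSpan ℝ (A' : Set (Fin d → ℝ)) := by
          intro hmem
          apply hvnot
          rw [← direction_affineSpan] at hmem
          exact (AffineSubspace.vsub_right_mem_direction_iff_mem
            (subset_affineSpan ℝ _ ha₀) v).1 hmem
        obtain ⟨g, hgU, hgx⟩ := exists_dual hva
        set c := g a₀ with hc0
        have hgA' : ∀ a ∈ A', g a = c := by
          intro a ha
          have hm : (a : Fin d → ℝ) -ᵥ a₀ ∈ vectorSpan ℝ (A' : Set (Fin d → ℝ)) :=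
            vsub_mem_vectorSpan ℝ (by exact_mod_cast ha) (by exact_mod_cast ha₀)
          have h11 := hgU _ hm
          rw [vsub_eq_sub, map_sub] at h11
          rw [hc0]
          linarith
        have hgv : g v = c + 1 := by
          rw [vsub_eq_sub, map_sub] at hgx
          rw [hc0]
          linarith
        have hcnt := count2 hvA hA' g c hgA' hgv K
        have hlb : ∀ J ∈ Finset.range (K+1),
            (((J + M).choose M : ℝ) * ((A.card : ℝ) - 1) - J * hc M J)
            ≤ (((J+1) • A').card : ℝ) := by
          intro J _
          have h6 := ih J A' hA'ne hdim'
          rw [hAcard] at h6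
          exact h6
        have hzero : (((0:ℕ) • A').card : ℝ) = 1 := by
          have h0 : ((0:ℕ) • A') = ({0} : Finset (Fin d → ℝ)) := by
            rw [zero_nsmul]; rfl
          rw [h0, Finset.card_singleton]
          norm_num
        have hshift : ∑ j ∈ Finset.range (K+2), ((j • A').card : ℝ)
            = 1 + ∑ J ∈ Finset.range (K+1), (((J+1) • A').card : ℝ) := by
          rw [Finset.sum_range_succ']
          rw [hzero]
          ring
        have hAL2 := AL2 M K (A.card : ℝ)
        have hsum := Finset.sum_le_sum hlb
        rw [hshift] at hcnt
        rw [hKM]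
        linarith

theorem P_all (m : ℕ) : P (d := d) m := by
  induction m with
  | zero => exact P_zero
  | succ M ih => exact P_succ M ih

end

end KFold

/-- k-fold Freiman lemma: if `A ⊆ ℝ^d` is finite with affine span of dimension `d`, then
`|kA| ≥ C(k+d-1, d)|A| - (k-1) C(k+d-1, d-1)`. -/
theorem stmt_14 (d k : ℕ) (hd : 0 < d) (hk : 0 < k)
    (A : Finset (Fin d → ℝ)) (hA : A.Nonempty)
    (hdim : affineSpan ℝ (A : Set (Fin d → ℝ)) = ⊤) :
    ((k + d - 1).choose d : ℝ) * A.card -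
      ((k : ℝ) - 1) * ((k + d - 1).choose (d - 1)) ≤ ((k • A).card : ℝ) := by
  obtain ⟨K, rfl⟩ : ∃ K, k = K + 1 := ⟨k - 1, by omega⟩
  have hadim : KFold.adim A = d := by
    unfold KFold.adim
    rw [← direction_affineSpan, hdim, AffineSubspace.direction_top]
    simp [Module.finrank_fintype_fun_eq_card]
  have := KFold.P_all (d := d) d K A hA hadim
  have hch : K + 1 + d - 1 = K + d := by omega
  rw [hch]
  have hhc : KFold.hc d K = ((K + d).choose (d-1) : ℝ) := by
    obtain ⟨D, rfl⟩ : ∃ D, d = D + 1 := ⟨d - 1, by omega⟩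
    have h9 : K + (D + 1) = K + D + 1 := by omega
    rw [h9]
    simp [KFold.hc]
  rw [← hhc]
  push_cast
  push_cast at this
  linarith
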